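/- Let N ≥ 2 be an integer, 0 ≤ λ ≤ ((N−1)/2)², γ = √((N−1)² − 4λ), h = (γ+1)/2, and define Ψ(r) = r^{−(N−2)/2} (sinh r / r)^{−(N−1+γ)/2} and W_λ(r) = λ + h²/r² + ((N−2)²/4 − h²)/sinh² r + ( γh/r + (N−1) Ψ′(r)/Ψ(r) ) (coth r − 1/r) for r > 0. Then Ψ is positive on (0,∞) and satisfies (r^{N−1} Ψ′(r))′ + r^{N−1} W_λ(r) Ψ(r) = 0 for all r > 0; that is, (r^{N−1}, r^{N−1} W_λ) is a Bessel pair on (0,∞) with positive solution Ψ. -/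

import Mathlib

open Real

theorem stmt_3 (N : ℕ) (hN : 2 ≤ N) (lam : ℝ)
    (hlam0 : 0 ≤ lam) (hlam1 : lam ≤ (((N : ℝ) - 1) / 2) ^ 2)
    (γ h : ℝ) (hγ : γ = Real.sqrt (((N : ℝ) - 1) ^ 2 - 4 * lam)) (hh : h = (γ + 1) / 2)
    (Ψ Wl : ℝ → ℝ)
    (hΨ : Ψ = fun r : ℝ =>
      r ^ (-(((N : ℝ) - 2) / 2)) * (Real.sinh r / r) ^ (-(((N : ℝ) - 1 + γ) / 2)))
    (hWl : Wl = fun r : ℝ =>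
      lam + h ^ 2 / r ^ 2 + (((N : ℝ) - 2) ^ 2 / 4 - h ^ 2) / Real.sinh r ^ 2
        + (γ * h / r + ((N : ℝ) - 1) * (deriv Ψ r / Ψ r))
            * (Real.cosh r / Real.sinh r - 1 / r)) :
    (∀ r : ℝ, 0 < r → 0 < Ψ r) ∧
    ∀ r : ℝ, 0 < r →
      deriv (fun s => s ^ (N - 1) * deriv Ψ s) r + r ^ (N - 1) * Wl r * Ψ r = 0 := by
  obtain ⟨M, rfl⟩ : ∃ M, N = M + 2 := ⟨N - 2, by omega⟩
  have hcast : ((M + 2 : ℕ) : ℝ) = (M : ℝ) + 2 := by push_cast; ring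
  have hΨpos : ∀ r : ℝ, 0 < r → 0 < Ψ r := by
    intro r hr
    rw [hΨ]
    have hs : 0 < Real.sinh r := Real.sinh_pos_iff.2 hr
    positivity
  refine ⟨hΨpos, ?_⟩
  intro r hr
  have hsinh : 0 < Real.sinh r := Real.sinh_pos_iff.2 hr
  set b : ℝ := -(((M : ℝ) + 1 + γ) / 2) with hb
  set Φ : ℝ → ℝ := fun s => s ^ h * Real.sinh s ^ b with hΦ
  have hΨeq : ∀ s : ℝ, 0 < s → Ψ s = Φ s := by
    intro s hs
    have hss : 0 < Real.sinh s := Real.sinh_pos_iff.2 hs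
    rw [hΨ]
    simp only [hcast]
    have hB : -(((M : ℝ) + 2 - 1 + γ) / 2) = b := by rw [hb]; ring
    have ha : -(((M : ℝ) + 2 - 2) / 2) = h + b := by rw [hh, hb]; ring
    rw [hB, ha, Real.div_rpow hss.le hs.le, Real.rpow_add hs, hΦ]
    have hsb : s ^ b ≠ 0 := (Real.rpow_pos_of_pos hs b).ne'
    field_simp
  -- derivative of Φ
  have hΦderiv : ∀ s : ℝ, 0 < s →
      HasDerivAt Φ (Φ s * (h / s + b * (Real.cosh s / Real.sinh s))) s := by
    intro s hs
    have hss : 0 < Real.sinh s := Real.sinh_pos_iff.2 hs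
    have h1 : HasDerivAt (fun x : ℝ => x ^ h) (h * s ^ (h - 1)) s :=
      Real.hasDerivAt_rpow_const (Or.inl hs.ne')
    have h2 : HasDerivAt (fun x : ℝ => Real.sinh x ^ b)
        (Real.cosh s * b * Real.sinh s ^ (b - 1)) s :=
      (Real.hasDerivAt_sinh s).rpow_const (Or.inl hss.ne')
    have : HasDerivAt (fun x : ℝ => x ^ h * Real.sinh x ^ b) _ s := h1.mul h2
    convert this using 1
    rw [hΦ]
    simp only
    rw [Real.rpow_sub_one hs.ne', Real.rpow_sub_one hss.ne']
    field_simp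
  have hΨderiv : ∀ s : ℝ, 0 < s →
      deriv Ψ s = Φ s * (h / s + b * (Real.cosh s / Real.sinh s)) := by
    intro s hs
    have hev : Ψ =ᶠ[nhds s] Φ := by
      filter_upwards [isOpen_Ioi.mem_nhds hs] with x hx using hΨeq x hx
    rw [hev.deriv_eq, (hΦderiv s hs).deriv]
  -- the auxiliary function G
  set g : ℝ → ℝ := fun s => h / s + b * (Real.cosh s / Real.sinh s) with hg
  set G : ℝ → ℝ := fun s => s ^ (M + 1) * (Φ s * g s) with hG
  have hgderiv : HasDerivAt g
      (-(h / r ^ 2) + b * ((Real.sinh r * Real.sinh r - Real.cosh r * Real.cosh r) /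
        Real.sinh r ^ 2)) r := by
    have h1 : HasDerivAt (fun s : ℝ => h / s) ((0 * r - h * 1) / r ^ 2) r :=
      (hasDerivAt_const r h).div (hasDerivAt_id r) hr.ne'
    have h2 : HasDerivAt (fun s : ℝ => Real.cosh s / Real.sinh s)
        ((Real.sinh r * Real.sinh r - Real.cosh r * Real.cosh r) / Real.sinh r ^ 2) r :=
      (Real.hasDerivAt_cosh r).div (Real.hasDerivAt_sinh r) hsinh.ne'
    have : HasDerivAt g _ r := h1.add ((h2.const_mul b))
    convert this using 1
    ring
  have hGderiv : HasDerivAt G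
      ((↑(M + 1) * r ^ M) * (Φ r * g r) + r ^ (M + 1) *
        ((Φ r * g r) * g r + Φ r *
          (-(h / r ^ 2) + b * ((Real.sinh r * Real.sinh r - Real.cosh r * Real.cosh r) /
            Real.sinh r ^ 2)))) r := by
    have hp : HasDerivAt (fun s : ℝ => s ^ (M + 1)) (↑(M + 1) * r ^ M) r := by
      simpa using hasDerivAt_pow (M + 1) r
    exact hp.mul ((hΦderiv r hr).mul hgderiv)
  have hFG : deriv (fun s => s ^ (M + 2 - 1) * deriv Ψ s) r = deriv G r := by
    apply Filter.EventuallyEq.deriv_eq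
    filter_upwards [isOpen_Ioi.mem_nhds hr] with x hx
    rw [hΨderiv x hx]
    rfl
  rw [hFG, hGderiv.deriv, hWl]
  have hΦr : (0:ℝ) < Φ r := by
    rw [hΦ]
    positivity
  simp only [hΨderiv r hr, hΨeq r hr, hcast,
    mul_div_cancel_left₀ _ hΦr.ne']
  have hγ2 : γ ^ 2 = ((M : ℝ) + 1) ^ 2 - 4 * lam := by
    rw [hγ, Real.sq_sqrt]
    · rw [hcast]; ring
    · rw [hcast]
      push_cast [hcast] at hlam1
      nlinarith
  have hlam : lam = (((M : ℝ) + 1) ^ 2 - γ ^ 2) / 4 := by linarith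
  have hC2 : Real.cosh r ^ 2 = 1 + Real.sinh r ^ 2 := Real.cosh_sq' r
  rw [hlam]
  subst hh
  simp only [hb, hg, Nat.add_sub_cancel, hcast, show M + 2 - 1 = M + 1 from rfl]
  push_cast
  set S := Real.sinh r with hSdef
  set C := Real.cosh r with hCdef
  set m := (M : ℝ) with hmdef
  have key : (m + 1) * ((γ + 1) / 2 / r + -((m + 1 + γ) / 2) * (C / S))
      + r * (((γ + 1) / 2 / r + -((m + 1 + γ) / 2) * (C / S)) ^ 2
      + (-((γ + 1) / 2 / r ^ 2) + -((m + 1 + γ) / 2) * ((S * S - C * C) / S ^ 2))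
      + (((m + 1) ^ 2 - γ ^ 2) / 4 + ((γ + 1) / 2) ^ 2 / r ^ 2
          + (m ^ 2 / 4 - ((γ + 1) / 2) ^ 2) / S ^ 2
          + (γ * ((γ + 1) / 2) / r
              + (m + 1) * ((γ + 1) / 2 / r + -((m + 1 + γ) / 2) * (C / S)))
            * (C / S - 1 / r))) = 0 := by
    have hrne : r ≠ 0 := hr.ne'
    have hSne : S ≠ 0 := hsinh.ne'
    field_simp
    linear_combination (4 * r ^ 2 * ((γ + 1) ^ 2 - m ^ 2)) * hC2
  linear_combination (Φ r * r ^ M) * key
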